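/- Let G be a tree and σ an automorphism of G whose fixed vertex set S = {x : σ(x) = x} is nonempty. Then: (i) S is connected (the subgraph induced on S is connected); (ii) for every vertex v with v ∉ S, dist(v, σ(v)) = 2 · dist(v, S), where dist(v,S) is the minimum of dist(v,s) over s ∈ S. -/

import Mathlib

open SimpleGraph

section Aux

variable {V : Type*} {G : SimpleGraph V}

private lemma getVert_map' (f : G →g G) {u v : V} (p : G.Walk u v) (i : ℕ) :
    (p.map f).getVert i = f (p.getVert i) := by
  induction p generalizing i with
  | nil => simp [SimpleGraph.Walk.getVert]
  | cons h q ih =>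
    cases i with
    | zero => simp
    | succ n => simpa [SimpleGraph.Walk.getVert_cons_succ] using ih n

/-- In a tree, every path realizes the distance. -/
private lemma path_len (hT : G.IsTree) {u v : V} (p : G.Walk u v) (hp : p.IsPath) :
    p.length = G.dist u v := by
  classical
  obtain ⟨q, hq⟩ := SimpleGraph.Reachable.exists_walk_length_eq_dist (⟨p⟩ : G.Reachable u v)
  have h2 : (⟨p, hp⟩ : G.Path u v) = ⟨q.bypass, q.bypass_isPath⟩ :=
    hT.2.path_unique _ _
  have h3 : p.length = q.bypass.length := by
    have := Subtype.ext_iff.1 h2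
    simp only at this
    rw [this]
  have h4 : q.bypass.length ≤ q.length := SimpleGraph.Walk.length_bypass_le q
  have h5 := SimpleGraph.dist_le p
  omega

private lemma iso_dist_le (σ : G ≃g G) (hc : G.Connected) (a b : V) :
    G.dist (σ a) (σ b) ≤ G.dist a b := by
  obtain ⟨p, hp⟩ := (hc a b).exists_walk_length_eq_dist
  calc G.dist (σ a) (σ b) ≤ (p.map σ.toHom).length := SimpleGraph.dist_le _
    _ = G.dist a b := by rw [SimpleGraph.Walk.length_map, hp]

private lemma iso_dist (σ : G ≃g G) (hc : G.Connected) (a b : V) :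
    G.dist (σ a) (σ b) = G.dist a b := by
  refine le_antisymm (iso_dist_le σ hc a b) ?_
  have := iso_dist_le σ.symm hc (σ a) (σ b)
  simpa using this

/-- Every vertex on the path between two fixed points is fixed. -/
private lemma fixed_on_path (hT : G.IsTree) (σ : G ≃g G) {x y : V}
    (hx : σ x = x) (hy : σ y = y) (p : G.Walk x y) (hp : p.IsPath) :
    ∀ u ∈ p.support, σ u = u := by
  have hσx : σ.toHom x = x := hx
  have hσy : σ.toHom y = y := hy
  set q : G.Walk x y := (p.map σ.toHom).copy hσx hσy with hqdef
  have hqp : q.IsPath := by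
    rw [SimpleGraph.Walk.isPath_copy]
    exact SimpleGraph.Walk.map_isPath_of_injective σ.toEquiv.injective hp
  have hpq : p = q := by
    have h2 : (⟨p, hp⟩ : G.Path x y) = ⟨q, hqp⟩ := hT.2.path_unique _ _
    have := Subtype.ext_iff.1 h2
    simpa using this
  intro u hu
  obtain ⟨i, hi, hiu⟩ := SimpleGraph.Walk.mem_support_iff_exists_getVert.1 hu
  have : q.getVert i = σ (p.getVert i) := by
    rw [hqdef, SimpleGraph.Walk.getVert_copy, getVert_map']
    rfl
  rw [← hi, ← this, ← hpq]

private lemma reach_induce {S : Set V} : ∀ {x y : V} (p : G.Walk x y)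
    (hsub : ∀ u ∈ p.support, u ∈ S),
    (G.induce S).Reachable ⟨x, hsub x p.start_mem_support⟩ ⟨y, hsub y p.end_mem_support⟩ := by
  intro x y p
  induction p with
  | nil => intro _; exact SimpleGraph.Reachable.refl _
  | @cons x z y h q ih =>
    intro hsub
    have hz : z ∈ S := hsub z (by simp)
    have hadj : (G.induce S).Adj ⟨x, hsub x (SimpleGraph.Walk.start_mem_support _)⟩ ⟨z, hz⟩ := by
      simpa using h
    have hq : ∀ u ∈ q.support, u ∈ S := fun u hu => hsub u (by simp [hu])
    exact hadj.reachable.trans (ih hq)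

/-- split of distance along a path. -/
private lemma split_dist (hT : G.IsTree) {v s u : V} (p : G.Walk v s) (hp : p.IsPath)
    (hu : u ∈ p.support) : G.dist v u + G.dist u s = p.length := by
  classical
  rw [← path_len hT _ (hp.takeUntil hu), ← path_len hT _ (hp.dropUntil hu),
    ← SimpleGraph.Walk.length_append, p.take_spec hu]

/-- On a path to `s`, vertices at equal distance from `s` coincide. -/
private lemma eq_on_path (hT : G.IsTree) {v s : V} (p : G.Walk v s) (hp : p.IsPath)
    {a b : V} (ha : a ∈ p.support) (hb : b ∈ p.support)
    (hd : G.dist a s = G.dist b s) : a = b := by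
  classical
  have hc := hT.1
  have hsplita := split_dist hT p hp ha
  have hsplitb := split_dist hT p hp hb
  have hmem : b ∈ ((p.takeUntil a ha).append (p.dropUntil a ha)).support := by
    rw [p.take_spec ha]; exact hb
  rw [SimpleGraph.Walk.mem_support_append_iff] at hmem
  rcases hmem with hbtake | hbdrop
  · -- b on the segment from v to a
    have htlen : (p.takeUntil a ha).length = G.dist v a := path_len hT _ (hp.takeUntil ha)
    have h1 := split_dist hT (p.takeUntil a ha) (hp.takeUntil ha) hbtake
    rw [htlen] at h1
    -- dist v b + dist b a = dist v a
    have hba : G.dist b a = 0 := by omega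
    exact ((hc.dist_eq_zero_iff).1 hba).symm
  · -- b on the segment from a to s
    have hdlen : (p.dropUntil a ha).length = G.dist a s := path_len hT _ (hp.dropUntil ha)
    have h1 := split_dist hT (p.dropUntil a ha) (hp.dropUntil ha) hbdrop
    rw [hdlen] at h1
    have hab : G.dist a b = 0 := by omega
    exact (hc.dist_eq_zero_iff).1 hab

end Aux

/-- For an automorphism `σ` of a tree `G` with nonempty fixed vertex set `S`:
(i) `S` is connected; (ii) for every vertex `v ∉ S`,
`dist v (σ v) = 2 * dist(v, S)`. -/
theorem fixed_set_connected_and_dist {V : Type*} (G : SimpleGraph V) (hT : G.IsTree)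
    (σ : G ≃g G) (hS : {x : V | σ x = x}.Nonempty) :
    (G.induce {x : V | σ x = x}).Connected ∧
    ∀ v : V, v ∉ {x : V | σ x = x} →
      G.dist v (σ v) = 2 * sInf (G.dist v '' {x : V | σ x = x}) := by
  classical
  have hc := hT.1
  set S : Set V := {x : V | σ x = x} with hSdef
  constructor
  · -- connectivity of the fixed set
    have hne : Nonempty S := ⟨⟨hS.choose, hS.choose_spec⟩⟩
    refine SimpleGraph.Connected.mk ?_
    rintro ⟨x, hx⟩ ⟨y, hy⟩
    obtain ⟨p, hp, -⟩ := hT.existsUnique_path x y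
    have hsub : ∀ u ∈ p.support, u ∈ S := fixed_on_path hT σ hx hy p hp
    exact reach_induce p hsub
  · intro v hv
    -- d is attained at some fixed vertex s
    have hne : (G.dist v '' S).Nonempty := hS.image _
    set d : ℕ := sInf (G.dist v '' S) with hddef
    obtain ⟨s, hsS, hds⟩ := Nat.sInf_mem hne
    obtain ⟨p, hp, -⟩ := hT.existsUnique_path v s
    have hplen : p.length = d := by rw [path_len hT p hp, hds]
    -- image of p under σ
    have hσs : σ.toHom s = s := hsS
    set q : G.Walk (σ v) s := (p.map σ.toHom).copy rfl hσs with hqdef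
    have hqp : q.IsPath := by
      rw [hqdef, SimpleGraph.Walk.isPath_copy]
      exact SimpleGraph.Walk.map_isPath_of_injective σ.toEquiv.injective hp
    have hqlen : q.length = d := by
      rw [hqdef, SimpleGraph.Walk.length_copy, SimpleGraph.Walk.length_map, hplen]
    -- any vertex on both p and (image of p) equals s
    have hkey : ∀ u ∈ p.support, u ∈ q.support → u = s := by
      intro u hup huq
      have huq' : u ∈ (p.support.map σ) := by
        have : q.support = p.support.map σ.toHom := by
          rw [hqdef, SimpleGraph.Walk.support_copy, SimpleGraph.Walk.support_map]
        rw [this] at huq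
        exact huq
      obtain ⟨a, hap, hau⟩ := List.mem_map.1 huq'
      have hσa : σ a ∈ p.support := hau ▸ hup
      have hdeq : G.dist a s = G.dist (σ a) s := by
        conv_rhs => rw [← hσs]
        exact (iso_dist σ hc a s).symm
      have haeq : a = σ a := eq_on_path hT p hp hap hσa hdeq
      have haS : a ∈ S := haeq.symm
      have hge : d ≤ G.dist v a := Nat.sInf_le ⟨a, haS, rfl⟩
      have hsum := split_dist hT p hp hap
      rw [hplen] at hsum
      have has : G.dist a s = 0 := by omega
      have : a = s := (hc.dist_eq_zero_iff).1 has
      rw [← hau, ← haeq, this]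
    -- the concatenated walk is a path
    set w : G.Walk v (σ v) := p.append q.reverse with hwdef
    have hwlen : w.length = 2 * d := by
      rw [hwdef, SimpleGraph.Walk.length_append, SimpleGraph.Walk.length_reverse,
        hplen, hqlen]
      omega
    have hqr : q.reverse.IsPath := hqp.reverse
    have hwpath : w.IsPath := by
      rw [hwdef, SimpleGraph.Walk.isPath_def, SimpleGraph.Walk.support_append,
        List.nodup_append]
      refine ⟨hp.support_nodup, ((SimpleGraph.Walk.isPath_def _).1 hqr).tail, ?_⟩
      intro u hup b huqt hub
      rw [← hub] at huqt
      have hsnot : s ∉ q.reverse.support.tail := by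
        have hnodup : q.reverse.support.Nodup := (SimpleGraph.Walk.isPath_def _).1 hqr
        have hcons := q.reverse.support_eq_cons
        rw [hcons] at hnodup
        exact List.Nodup.notMem hnodup
      have huq : u ∈ q.support := by
        have : u ∈ q.reverse.support := List.mem_of_mem_tail huqt
        rwa [SimpleGraph.Walk.support_reverse, List.mem_reverse] at this
      have : u = s := hkey u hup huq
      rw [this] at huqt
      exact hsnot huqt
    calc G.dist v (σ v) = w.length := (path_len hT w hwpath).symm
      _ = 2 * d := hwlen
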